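/- With h = 1/3 and ℓ = 0, the input polytope I(0, 1/3) on {0,1}^2 contains all distributions supported on exactly three input pairs with value 1/3 each. Using such input distributions together with deterministic local responses, every vertex of the MDL polytope of the form 'one input pair excluded' is achievable; in particular for any PR-box behavior P_PR(ab|xy) = (1/2)·[a ⊕ b = x·y], there is a measurement dependent local model with ℓ = 0, h = 1/3 and uniform observed inputs reproducing P(a,b,x,y) = (1/4)·P_PR(ab|xy). -/
import Mathlib

private def A17 : ℕ → Fin 2 → Fin 2 := fun l x =>
  match l, x with
  | 0, 0 => 0 | 0, 1 => 0
  | 1, 0 => 0 | 1, 1 => 0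
  | 2, 0 => 0 | 2, 1 => 1
  | 3, 0 => 0 | 3, 1 => 1
  | 4, 0 => 1 | 4, 1 => 0
  | 5, 0 => 1 | 5, 1 => 0
  | 6, 0 => 1 | 6, 1 => 1
  | 7, 0 => 1 | 7, 1 => 1
  | _, _ => 0

private def B17 : ℕ → Fin 2 → Fin 2 := fun l y =>
  match l, y with
  | 0, 0 => 0 | 0, 1 => 0
  | 1, 0 => 0 | 1, 1 => 1
  | 2, 0 => 0 | 2, 1 => 0
  | 3, 0 => 1 | 3, 1 => 0
  | 4, 0 => 0 | 4, 1 => 1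
  | 5, 0 => 1 | 5, 1 => 1
  | 6, 0 => 1 | 6, 1 => 0
  | 7, 0 => 1 | 7, 1 => 1
  | _, _ => 0

@[simp] private lemma A17_00 : A17 0 0 = 0 := rfl
@[simp] private lemma A17_01 : A17 0 1 = 0 := rfl
@[simp] private lemma B17_00 : B17 0 0 = 0 := rfl
@[simp] private lemma B17_01 : B17 0 1 = 0 := rfl
@[simp] private lemma A17_10 : A17 1 0 = 0 := rfl
@[simp] private lemma A17_11 : A17 1 1 = 0 := rfl
@[simp] private lemma B17_10 : B17 1 0 = 0 := rfl
@[simp] private lemma B17_11 : B17 1 1 = 1 := rfl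
@[simp] private lemma A17_20 : A17 2 0 = 0 := rfl
@[simp] private lemma A17_21 : A17 2 1 = 1 := rfl
@[simp] private lemma B17_20 : B17 2 0 = 0 := rfl
@[simp] private lemma B17_21 : B17 2 1 = 0 := rfl
@[simp] private lemma A17_30 : A17 3 0 = 0 := rfl
@[simp] private lemma A17_31 : A17 3 1 = 1 := rfl
@[simp] private lemma B17_30 : B17 3 0 = 1 := rfl
@[simp] private lemma B17_31 : B17 3 1 = 0 := rfl
@[simp] private lemma A17_40 : A17 4 0 = 1 := rfl
@[simp] private lemma A17_41 : A17 4 1 = 0 := rfl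
@[simp] private lemma B17_40 : B17 4 0 = 0 := rfl
@[simp] private lemma B17_41 : B17 4 1 = 1 := rfl
@[simp] private lemma A17_50 : A17 5 0 = 1 := rfl
@[simp] private lemma A17_51 : A17 5 1 = 0 := rfl
@[simp] private lemma B17_50 : B17 5 0 = 1 := rfl
@[simp] private lemma B17_51 : B17 5 1 = 1 := rfl
@[simp] private lemma A17_60 : A17 6 0 = 1 := rfl
@[simp] private lemma A17_61 : A17 6 1 = 1 := rfl
@[simp] private lemma B17_60 : B17 6 0 = 1 := rfl
@[simp] private lemma B17_61 : B17 6 1 = 0 := rfl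
@[simp] private lemma A17_70 : A17 7 0 = 1 := rfl
@[simp] private lemma A17_71 : A17 7 1 = 1 := rfl
@[simp] private lemma B17_70 : B17 7 0 = 1 := rfl
@[simp] private lemma B17_71 : B17 7 1 = 1 := rfl

private noncomputable def Q17 : ℕ → Fin 2 → Fin 2 → ℝ := fun l x y =>
  if A17 l x + B17 l y = x * y then 1 / 3 else 0

set_option maxHeartbeats 1000000 in
theorem stmt_17 :
    -- the input polytope I(0, 1/3) contains every distribution putting weight 1/3
    -- on three input pairs and excluding the remaining one
    (∀ x₀ y₀ : Fin 2,
      (∀ x y : Fin 2, 0 ≤ (if (x, y) = (x₀, y₀) then (0:ℝ) else 1 / 3) ∧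
        (if (x, y) = (x₀, y₀) then (0:ℝ) else 1 / 3) ≤ 1 / 3) ∧
      (∑ x : Fin 2, ∑ y : Fin 2, (if (x, y) = (x₀, y₀) then (0:ℝ) else 1 / 3)) = 1) ∧
    -- an MDL model with ℓ = 0, h = 1/3 and uniform observed inputs that reproduces
    -- the PR box behavior P_PR(ab|xy) = (1/2)·[a ⊕ b = x·y]
    (∃ (Λ : Finset ℕ) (ρ : ℕ → ℝ)
        (q : ℕ → Fin 2 → Fin 2 → ℝ)
        (α β : ℕ → Fin 2 → Fin 2),
      (∀ l ∈ Λ, 0 ≤ ρ l) ∧ (∑ l ∈ Λ, ρ l = 1) ∧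
      (∀ l ∈ Λ, ∀ x y, 0 ≤ q l x y ∧ q l x y ≤ 1 / 3) ∧
      (∀ l ∈ Λ, ∑ x : Fin 2, ∑ y : Fin 2, q l x y = 1) ∧
      -- uniform observed inputs
      (∀ x y : Fin 2, ∑ l ∈ Λ, ρ l * q l x y = 1 / 4) ∧
      (∀ a b x y : Fin 2,
        (∑ l ∈ Λ, ρ l * q l x y *
            (if α l x = a then (1:ℝ) else 0) * (if β l y = b then (1:ℝ) else 0)) =
          1 / 4 * (if a + b = x * y then (1 / 2 : ℝ) else 0))) := by
  constructor
  · intro x₀ y₀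
    constructor
    · intro x y
      constructor <;> split <;> norm_num
    · fin_cases x₀ <;> fin_cases y₀ <;>
        · simp (config := { decide := true }) [Fin.sum_univ_two] <;> norm_num
  · refine ⟨Finset.range 8, fun _ => 1 / 8, Q17, A17, B17, ?_, ?_, ?_, ?_, ?_, ?_⟩
    · intro l _ <;> norm_num
    · simp [Finset.sum_range_succ] <;> norm_num
    · intro l _ x y
      constructor <;> (unfold Q17; split <;> norm_num)
    · intro l hl
      rw [Finset.mem_range] at hl
      interval_cases l <;>
        · simp (config := { decide := true }) [Fin.sum_univ_two, Q17] <;> norm_num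
    · intro x y
      fin_cases x <;> fin_cases y <;>
        · simp (config := { decide := true }) [Finset.sum_range_succ, Q17] <;> norm_num
    · intro a b x y
      fin_cases a <;> fin_cases b <;> fin_cases x <;> fin_cases y <;>
        · simp (config := { decide := true }) [Finset.sum_range_succ, Q17] <;> norm_num
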